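/- (Example 4.1, Maxwell left kernel.) Let R = MvPolynomial (Fin 4) ℝ with variables dx = X 0, dy = X 1, dz = X 2, dt = X 3, and let A (8×10) and B (10×4) be the matrices over R defined as follows. Rows of A: (0, −dz, dy, dt, 0, 0, 0, 0, 0, 0); (dz, 0, −dx, 0, dt, 0, 0, 0, 0, 0); (−dy, dx, 0, 0, 0, dt, 0, 0, 0, 0); (0, 0, 0, dx, dy, dz, 0, 0, 0, 0); (−dt, 0, 0, 0, −dz, dy, −1, 0, 0, 0); (0, −dt, 0, dz, 0, −dx, 0, −1, 0, 0); (0, 0, −dt, −dy, dx, 0, 0, 0, −1, 0); (dx, dy, dz, 0, 0, 0, 0, 0, 0, −1). Rows of B: (dx, dt, 0, 0); (dy, 0, dt, 0); (dz, 0, 0, dt); (0, 0, dz, −dy); (0, −dz, 0, dx); (0, dy, −dx, 0); (−dt·dx, dy²+dz²−dt², −dy·dx, −dz·dx); (−dt·dy, −dy·dx, dx²+dz²−dt², −dz·dy); (−dt·dz, −dz·dx, −dz·dy, dx²+dy²−dt²); (dx²+dy²+dz², dt·dx, dt·dy, dt·dz). Then the kernel of the R-linear map R¹⁰ → R⁴,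 w ↦ Matrix.vecMul w B, equals the R-submodule of R¹⁰ generated by the eight rows of A. -/

import Mathlib

open MvPolynomial Matrix

noncomputable section

/-- The operator symbol `∂ₓ`. -/
def dx : MvPolynomial (Fin 4) ℝ := X 0
/-- The operator symbol `∂_y`. -/
def dy : MvPolynomial (Fin 4) ℝ := X 1
/-- The operator symbol `∂_z`. -/
def dz : MvPolynomial (Fin 4) ℝ := X 2
/-- The operator symbol `∂_t`. -/
def dt : MvPolynomial (Fin 4) ℝ := X 3

/-- The operator matrix of the inhomogeneous Maxwell equations (all constants set to 1). -/
def maxwellA : Matrix (Fin 8) (Fin 10) (MvPolynomial (Fin 4) ℝ) :=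
  !![0, -dz, dy, dt, 0, 0, 0, 0, 0, 0;
     dz, 0, -dx, 0, dt, 0, 0, 0, 0, 0;
     -dy, dx, 0, 0, 0, dt, 0, 0, 0, 0;
     0, 0, 0, dx, dy, dz, 0, 0, 0, 0;
     -dt, 0, 0, 0, -dz, dy, -1, 0, 0, 0;
     0, -dt, 0, dz, 0, -dx, 0, -1, 0, 0;
     0, 0, -dt, -dy, dx, 0, 0, 0, -1, 0;
     dx, dy, dz, 0, 0, 0, 0, 0, 0, -1]

/-- The parametrization of Maxwell's equations by the electric and magnetic potentials. -/
def maxwellB : Matrix (Fin 10) (Fin 4) (MvPolynomial (Fin 4) ℝ) :=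
  !![dx, dt, 0, 0;
     dy, 0, dt, 0;
     dz, 0, 0, dt;
     0, 0, dz, -dy;
     0, -dz, 0, dx;
     0, dy, -dx, 0;
     -(dt*dx), dy^2+dz^2-dt^2, -(dy*dx), -(dz*dx);
     -(dt*dy), -(dy*dx), dx^2+dz^2-dt^2, -(dz*dy);
     -(dt*dz), -(dz*dx), -(dz*dy), dx^2+dy^2-dt^2;
     dx^2+dy^2+dz^2, dt*dx, dt*dy, dt*dz]

/-- Substitution of `0` for the variable `X k`. -/
def kill (k : Fin 4) : MvPolynomial (Fin 4) ℝ →ₐ[ℝ] MvPolynomial (Fin 4) ℝ :=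
  aeval (fun i => if i = k then 0 else X i)

lemma kill_X (k i : Fin 4) : kill k (X i) = if i = k then 0 else X i := by
  simp [kill]

lemma kill_kill (k : Fin 4) (f : MvPolynomial (Fin 4) ℝ) :
    kill k (kill k f) = kill k f := by
  have h : (kill k).comp (kill k) = kill k := by
    apply MvPolynomial.algHom_ext
    intro i
    by_cases h : i = k <;> simp [kill_X, h]
  exact DFunLike.congr_fun h f

lemma kill_decomp (k : Fin 4) (f : MvPolynomial (Fin 4) ℝ) :
    ∃ g, f = kill k f + X k * g := by
  induction f using MvPolynomial.induction_on with
  | C a => exact ⟨0, by simp [kill]⟩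
  | add p q hp hq =>
    obtain ⟨g1, h1⟩ := hp; obtain ⟨g2, h2⟩ := hq
    exact ⟨g1 + g2, by rw [map_add]; linear_combination h1 + h2⟩
  | mul_X p i hp =>
    obtain ⟨g, hg⟩ := hp
    by_cases h : i = k
    · subst h
      exact ⟨kill i p + X i * g,
        by rw [_root_.map_mul, kill_X, if_pos rfl, mul_zero]; linear_combination (X i) * hg⟩
    · exact ⟨g * X i, by rw [_root_.map_mul, kill_X, if_neg h]; linear_combination (X i) * hg⟩

lemma Fin.sum_univ_ten' {M : Type*} [AddCommMonoid M] (f : Fin 10 → M) :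
    ∑ i, f i = f 0 + f 1 + f 2 + f 3 + f 4 + f 5 + f 6 + f 7 + f 8 + f 9 := by
  simp [Fin.sum_univ_succ, add_assoc]

lemma hAB00 : ∑ j, maxwellA 0 j * maxwellB j 0 = 0 := by
  rw [Fin.sum_univ_ten']
  show (0) * (dx) + (-dz) * (dy) + (dy) * (dz) + (dt) * (0) + (0) * (0) + (0) * (0) + (0) * (-(dt*dx)) + (0) * (-(dt*dy)) + (0) * (-(dt*dz)) + (0) * (dx^2+dy^2+dz^2) = 0
  ring

lemma hAB01 : ∑ j, maxwellA 0 j * maxwellB j 1 = 0 := by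
  rw [Fin.sum_univ_ten']
  show (0) * (dt) + (-dz) * (0) + (dy) * (0) + (dt) * (0) + (0) * (-dz) + (0) * (dy) + (0) * (dy^2+dz^2-dt^2) + (0) * (-(dy*dx)) + (0) * (-(dz*dx)) + (0) * (dt*dx) = 0
  ring

lemma hAB02 : ∑ j, maxwellA 0 j * maxwellB j 2 = 0 := by
  rw [Fin.sum_univ_ten']
  show (0) * (0) + (-dz) * (dt) + (dy) * (0) + (dt) * (dz) + (0) * (0) + (0) * (-dx) + (0) * (-(dy*dx)) + (0) * (dx^2+dz^2-dt^2) + (0) * (-(dz*dy)) + (0) * (dt*dy) = 0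
  ring

lemma hAB03 : ∑ j, maxwellA 0 j * maxwellB j 3 = 0 := by
  rw [Fin.sum_univ_ten']
  show (0) * (0) + (-dz) * (0) + (dy) * (dt) + (dt) * (-dy) + (0) * (dx) + (0) * (0) + (0) * (-(dz*dx)) + (0) * (-(dz*dy)) + (0) * (dx^2+dy^2-dt^2) + (0) * (dt*dz) = 0
  ring

lemma hAB10 : ∑ j, maxwellA 1 j * maxwellB j 0 = 0 := by
  rw [Fin.sum_univ_ten']
  show (dz) * (dx) + (0) * (dy) + (-dx) * (dz) + (0) * (0) + (dt) * (0) + (0) * (0) + (0) * (-(dt*dx)) + (0) * (-(dt*dy)) + (0) * (-(dt*dz)) + (0) * (dx^2+dy^2+dz^2) = 0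
  ring

lemma hAB11 : ∑ j, maxwellA 1 j * maxwellB j 1 = 0 := by
  rw [Fin.sum_univ_ten']
  show (dz) * (dt) + (0) * (0) + (-dx) * (0) + (0) * (0) + (dt) * (-dz) + (0) * (dy) + (0) * (dy^2+dz^2-dt^2) + (0) * (-(dy*dx)) + (0) * (-(dz*dx)) + (0) * (dt*dx) = 0
  ring

lemma hAB12 : ∑ j, maxwellA 1 j * maxwellB j 2 = 0 := by
  rw [Fin.sum_univ_ten']
  show (dz) * (0) + (0) * (dt) + (-dx) * (0) + (0) * (dz) + (dt) * (0) + (0) * (-dx) + (0) * (-(dy*dx)) + (0) * (dx^2+dz^2-dt^2) + (0) * (-(dz*dy)) + (0) * (dt*dy) = 0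
  ring

lemma hAB13 : ∑ j, maxwellA 1 j * maxwellB j 3 = 0 := by
  rw [Fin.sum_univ_ten']
  show (dz) * (0) + (0) * (0) + (-dx) * (dt) + (0) * (-dy) + (dt) * (dx) + (0) * (0) + (0) * (-(dz*dx)) + (0) * (-(dz*dy)) + (0) * (dx^2+dy^2-dt^2) + (0) * (dt*dz) = 0
  ring

lemma hAB20 : ∑ j, maxwellA 2 j * maxwellB j 0 = 0 := by
  rw [Fin.sum_univ_ten']
  show (-dy) * (dx) + (dx) * (dy) + (0) * (dz) + (0) * (0) + (0) * (0) + (dt) * (0) + (0) * (-(dt*dx)) + (0) * (-(dt*dy)) + (0) * (-(dt*dz)) + (0) * (dx^2+dy^2+dz^2) = 0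
  ring

lemma hAB21 : ∑ j, maxwellA 2 j * maxwellB j 1 = 0 := by
  rw [Fin.sum_univ_ten']
  show (-dy) * (dt) + (dx) * (0) + (0) * (0) + (0) * (0) + (0) * (-dz) + (dt) * (dy) + (0) * (dy^2+dz^2-dt^2) + (0) * (-(dy*dx)) + (0) * (-(dz*dx)) + (0) * (dt*dx) = 0
  ring

lemma hAB22 : ∑ j, maxwellA 2 j * maxwellB j 2 = 0 := by
  rw [Fin.sum_univ_ten']
  show (-dy) * (0) + (dx) * (dt) + (0) * (0) + (0) * (dz) + (0) * (0) + (dt) * (-dx) + (0) * (-(dy*dx)) + (0) * (dx^2+dz^2-dt^2) + (0) * (-(dz*dy)) + (0) * (dt*dy) = 0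
  ring

lemma hAB23 : ∑ j, maxwellA 2 j * maxwellB j 3 = 0 := by
  rw [Fin.sum_univ_ten']
  show (-dy) * (0) + (dx) * (0) + (0) * (dt) + (0) * (-dy) + (0) * (dx) + (dt) * (0) + (0) * (-(dz*dx)) + (0) * (-(dz*dy)) + (0) * (dx^2+dy^2-dt^2) + (0) * (dt*dz) = 0
  ring

lemma hAB30 : ∑ j, maxwellA 3 j * maxwellB j 0 = 0 := by
  rw [Fin.sum_univ_ten']
  show (0) * (dx) + (0) * (dy) + (0) * (dz) + (dx) * (0) + (dy) * (0) + (dz) * (0) + (0) * (-(dt*dx)) + (0) * (-(dt*dy)) + (0) * (-(dt*dz)) + (0) * (dx^2+dy^2+dz^2) = 0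
  ring

lemma hAB31 : ∑ j, maxwellA 3 j * maxwellB j 1 = 0 := by
  rw [Fin.sum_univ_ten']
  show (0) * (dt) + (0) * (0) + (0) * (0) + (dx) * (0) + (dy) * (-dz) + (dz) * (dy) + (0) * (dy^2+dz^2-dt^2) + (0) * (-(dy*dx)) + (0) * (-(dz*dx)) + (0) * (dt*dx) = 0
  ring

lemma hAB32 : ∑ j, maxwellA 3 j * maxwellB j 2 = 0 := by
  rw [Fin.sum_univ_ten']
  show (0) * (0) + (0) * (dt) + (0) * (0) + (dx) * (dz) + (dy) * (0) + (dz) * (-dx) + (0) * (-(dy*dx)) + (0) * (dx^2+dz^2-dt^2) + (0) * (-(dz*dy)) + (0) * (dt*dy) = 0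
  ring

lemma hAB33 : ∑ j, maxwellA 3 j * maxwellB j 3 = 0 := by
  rw [Fin.sum_univ_ten']
  show (0) * (0) + (0) * (0) + (0) * (dt) + (dx) * (-dy) + (dy) * (dx) + (dz) * (0) + (0) * (-(dz*dx)) + (0) * (-(dz*dy)) + (0) * (dx^2+dy^2-dt^2) + (0) * (dt*dz) = 0
  ring

lemma hAB40 : ∑ j, maxwellA 4 j * maxwellB j 0 = 0 := by
  rw [Fin.sum_univ_ten']
  show (-dt) * (dx) + (0) * (dy) + (0) * (dz) + (0) * (0) + (-dz) * (0) + (dy) * (0) + (-1) * (-(dt*dx)) + (0) * (-(dt*dy)) + (0) * (-(dt*dz)) + (0) * (dx^2+dy^2+dz^2) = 0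
  ring

lemma hAB41 : ∑ j, maxwellA 4 j * maxwellB j 1 = 0 := by
  rw [Fin.sum_univ_ten']
  show (-dt) * (dt) + (0) * (0) + (0) * (0) + (0) * (0) + (-dz) * (-dz) + (dy) * (dy) + (-1) * (dy^2+dz^2-dt^2) + (0) * (-(dy*dx)) + (0) * (-(dz*dx)) + (0) * (dt*dx) = 0
  ring

lemma hAB42 : ∑ j, maxwellA 4 j * maxwellB j 2 = 0 := by
  rw [Fin.sum_univ_ten']
  show (-dt) * (0) + (0) * (dt) + (0) * (0) + (0) * (dz) + (-dz) * (0) + (dy) * (-dx) + (-1) * (-(dy*dx)) + (0) * (dx^2+dz^2-dt^2) + (0) * (-(dz*dy)) + (0) * (dt*dy) = 0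
  ring

lemma hAB43 : ∑ j, maxwellA 4 j * maxwellB j 3 = 0 := by
  rw [Fin.sum_univ_ten']
  show (-dt) * (0) + (0) * (0) + (0) * (dt) + (0) * (-dy) + (-dz) * (dx) + (dy) * (0) + (-1) * (-(dz*dx)) + (0) * (-(dz*dy)) + (0) * (dx^2+dy^2-dt^2) + (0) * (dt*dz) = 0
  ring

lemma hAB50 : ∑ j, maxwellA 5 j * maxwellB j 0 = 0 := by
  rw [Fin.sum_univ_ten']
  show (0) * (dx) + (-dt) * (dy) + (0) * (dz) + (dz) * (0) + (0) * (0) + (-dx) * (0) + (0) * (-(dt*dx)) + (-1) * (-(dt*dy)) + (0) * (-(dt*dz)) + (0) * (dx^2+dy^2+dz^2) = 0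
  ring

lemma hAB51 : ∑ j, maxwellA 5 j * maxwellB j 1 = 0 := by
  rw [Fin.sum_univ_ten']
  show (0) * (dt) + (-dt) * (0) + (0) * (0) + (dz) * (0) + (0) * (-dz) + (-dx) * (dy) + (0) * (dy^2+dz^2-dt^2) + (-1) * (-(dy*dx)) + (0) * (-(dz*dx)) + (0) * (dt*dx) = 0
  ring

lemma hAB52 : ∑ j, maxwellA 5 j * maxwellB j 2 = 0 := by
  rw [Fin.sum_univ_ten']
  show (0) * (0) + (-dt) * (dt) + (0) * (0) + (dz) * (dz) + (0) * (0) + (-dx) * (-dx) + (0) * (-(dy*dx)) + (-1) * (dx^2+dz^2-dt^2) + (0) * (-(dz*dy)) + (0) * (dt*dy) = 0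
  ring

lemma hAB53 : ∑ j, maxwellA 5 j * maxwellB j 3 = 0 := by
  rw [Fin.sum_univ_ten']
  show (0) * (0) + (-dt) * (0) + (0) * (dt) + (dz) * (-dy) + (0) * (dx) + (-dx) * (0) + (0) * (-(dz*dx)) + (-1) * (-(dz*dy)) + (0) * (dx^2+dy^2-dt^2) + (0) * (dt*dz) = 0
  ring

lemma hAB60 : ∑ j, maxwellA 6 j * maxwellB j 0 = 0 := by
  rw [Fin.sum_univ_ten']
  show (0) * (dx) + (0) * (dy) + (-dt) * (dz) + (-dy) * (0) + (dx) * (0) + (0) * (0) + (0) * (-(dt*dx)) + (0) * (-(dt*dy)) + (-1) * (-(dt*dz)) + (0) * (dx^2+dy^2+dz^2) = 0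
  ring

lemma hAB61 : ∑ j, maxwellA 6 j * maxwellB j 1 = 0 := by
  rw [Fin.sum_univ_ten']
  show (0) * (dt) + (0) * (0) + (-dt) * (0) + (-dy) * (0) + (dx) * (-dz) + (0) * (dy) + (0) * (dy^2+dz^2-dt^2) + (0) * (-(dy*dx)) + (-1) * (-(dz*dx)) + (0) * (dt*dx) = 0
  ring

lemma hAB62 : ∑ j, maxwellA 6 j * maxwellB j 2 = 0 := by
  rw [Fin.sum_univ_ten']
  show (0) * (0) + (0) * (dt) + (-dt) * (0) + (-dy) * (dz) + (dx) * (0) + (0) * (-dx) + (0) * (-(dy*dx)) + (0) * (dx^2+dz^2-dt^2) + (-1) * (-(dz*dy)) + (0) * (dt*dy) = 0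
  ring

lemma hAB63 : ∑ j, maxwellA 6 j * maxwellB j 3 = 0 := by
  rw [Fin.sum_univ_ten']
  show (0) * (0) + (0) * (0) + (-dt) * (dt) + (-dy) * (-dy) + (dx) * (dx) + (0) * (0) + (0) * (-(dz*dx)) + (0) * (-(dz*dy)) + (-1) * (dx^2+dy^2-dt^2) + (0) * (dt*dz) = 0
  ring

lemma hAB70 : ∑ j, maxwellA 7 j * maxwellB j 0 = 0 := by
  rw [Fin.sum_univ_ten']
  show (dx) * (dx) + (dy) * (dy) + (dz) * (dz) + (0) * (0) + (0) * (0) + (0) * (0) + (0) * (-(dt*dx)) + (0) * (-(dt*dy)) + (0) * (-(dt*dz)) + (-1) * (dx^2+dy^2+dz^2) = 0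
  ring

lemma hAB71 : ∑ j, maxwellA 7 j * maxwellB j 1 = 0 := by
  rw [Fin.sum_univ_ten']
  show (dx) * (dt) + (dy) * (0) + (dz) * (0) + (0) * (0) + (0) * (-dz) + (0) * (dy) + (0) * (dy^2+dz^2-dt^2) + (0) * (-(dy*dx)) + (0) * (-(dz*dx)) + (-1) * (dt*dx) = 0
  ring

lemma hAB72 : ∑ j, maxwellA 7 j * maxwellB j 2 = 0 := by
  rw [Fin.sum_univ_ten']
  show (dx) * (0) + (dy) * (dt) + (dz) * (0) + (0) * (dz) + (0) * (0) + (0) * (-dx) + (0) * (-(dy*dx)) + (0) * (dx^2+dz^2-dt^2) + (0) * (-(dz*dy)) + (-1) * (dt*dy) = 0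
  ring

lemma hAB73 : ∑ j, maxwellA 7 j * maxwellB j 3 = 0 := by
  rw [Fin.sum_univ_ten']
  show (dx) * (0) + (dy) * (0) + (dz) * (dt) + (0) * (-dy) + (0) * (dx) + (0) * (0) + (0) * (-(dz*dx)) + (0) * (-(dz*dy)) + (0) * (dx^2+dy^2-dt^2) + (-1) * (dt*dz) = 0
  ring


/-- Example 4.1, Maxwell left kernel: the left kernel of the potential matrix `B` is
generated by the eight rows of the Maxwell operator matrix `A`. -/
theorem maxwell_left_kernel :
    LinearMap.ker maxwellB.vecMulLinear =
      Submodule.span (MvPolynomial (Fin 4) ℝ)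
        (Set.range fun i : Fin 8 => fun j : Fin 10 => maxwellA i j) := by
  have hdt : (dt : MvPolynomial (Fin 4) ℝ) ≠ 0 := MvPolynomial.X_ne_zero 3
  have hdx : (dx : MvPolynomial (Fin 4) ℝ) ≠ 0 := MvPolynomial.X_ne_zero 0
  have hdy : (dy : MvPolynomial (Fin 4) ℝ) ≠ 0 := MvPolynomial.X_ne_zero 1
  have kdx : kill 3 dx = dx := by rw [dx, kill_X, if_neg (by decide)]
  have kdy : kill 3 dy = dy := by rw [dy, kill_X, if_neg (by decide)]
  have kdz : kill 3 dz = dz := by rw [dz, kill_X, if_neg (by decide)]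
  have kdt : kill 3 dt = 0 := by rw [dt, kill_X, if_pos rfl]
  have k0x : kill 0 dx = 0 := by rw [dx, kill_X, if_pos rfl]
  have k0y : kill 0 dy = dy := by rw [dy, kill_X, if_neg (by decide)]
  refine le_antisymm ?_ (Submodule.span_le.mpr ?_)
  · intro w hw
    rw [LinearMap.mem_ker, Matrix.vecMulLinear_apply] at hw
    have h0 : w 0 * (dx) + w 1 * (dy) + w 2 * (dz) + w 3 * (0) + w 4 * (0) + w 5 * (0) + w 6 * (-(dt*dx)) + w 7 * (-(dt*dy)) + w 8 * (-(dt*dz)) + w 9 * (dx^2+dy^2+dz^2) = 0 := by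
      have h : ∑ i, w i * maxwellB i 0 = 0 := congrFun hw 0
      rw [Fin.sum_univ_ten'] at h
      exact h
    have h1 : w 0 * (dt) + w 1 * (0) + w 2 * (0) + w 3 * (0) + w 4 * (-dz) + w 5 * (dy) + w 6 * (dy^2+dz^2-dt^2) + w 7 * (-(dy*dx)) + w 8 * (-(dz*dx)) + w 9 * (dt*dx) = 0 := by
      have h : ∑ i, w i * maxwellB i 1 = 0 := congrFun hw 1
      rw [Fin.sum_univ_ten'] at h
      exact h
    have h2 : w 0 * (0) + w 1 * (dt) + w 2 * (0) + w 3 * (dz) + w 4 * (0) + w 5 * (-dx) + w 6 * (-(dy*dx)) + w 7 * (dx^2+dz^2-dt^2) + w 8 * (-(dz*dy)) + w 9 * (dt*dy) = 0 := by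
      have h : ∑ i, w i * maxwellB i 2 = 0 := congrFun hw 2
      rw [Fin.sum_univ_ten'] at h
      exact h
    have h3 : w 0 * (0) + w 1 * (0) + w 2 * (dt) + w 3 * (-dy) + w 4 * (dx) + w 5 * (0) + w 6 * (-(dz*dx)) + w 7 * (-(dz*dy)) + w 8 * (dx^2+dy^2-dt^2) + w 9 * (dt*dz) = 0 := by
      have h : ∑ i, w i * maxwellB i 3 = 0 := congrFun hw 3
      rw [Fin.sum_univ_ten'] at h
      exact h
    obtain ⟨g3, hg3'⟩ := kill_decomp 3 (w 3 + w 7 * dz - w 8 * dy)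
    obtain ⟨g4, hg4'⟩ := kill_decomp 3 (w 4 - w 6 * dz + w 8 * dx)
    obtain ⟨g5, hg5'⟩ := kill_decomp 3 (w 5 + w 6 * dy - w 7 * dx)
    set v3 := kill 3 (w 3 + w 7 * dz - w 8 * dy) with hv3def
    set v4 := kill 3 (w 4 - w 6 * dz + w 8 * dx) with hv4def
    set v5 := kill 3 (w 5 + w 6 * dy - w 7 * dx) with hv5def
    have hg3 : w 3 + w 7 * dz - w 8 * dy = v3 + dt * g3 := hg3'
    have hg4 : w 4 - w 6 * dz + w 8 * dx = v4 + dt * g4 := hg4'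
    have hg5 : w 5 + w 6 * dy - w 7 * dx = v5 + dt * g5 := hg5'
    have kv3 : kill 3 v3 = v3 := by rw [hv3def]; exact kill_kill _ _
    have kv4 : kill 3 v4 = v4 := by rw [hv4def]; exact kill_kill _ _
    have kv5 : kill 3 v5 = v5 := by rw [hv5def]; exact kill_kill _ _
    have e1 : (w 0 - w 6 * dt + w 9 * dx - g4 * dz + g5 * dy) * dt - v4 * dz + v5 * dy = 0 := by
      linear_combination h1 + dz * hg4 - dy * hg5
    have e2 : (w 1 - w 7 * dt + w 9 * dy + g3 * dz - g5 * dx) * dt + v3 * dz - v5 * dx = 0 := by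
      linear_combination h2 - dz * hg3 + dx * hg5
    have e3 : (w 2 - w 8 * dt + w 9 * dz - g3 * dy + g4 * dx) * dt - v3 * dy + v4 * dx = 0 := by
      linear_combination h3 + dy * hg3 - dx * hg4
    have f1 : v4 * dz = v5 * dy := by
      have h := congrArg (kill 3) e1
      simp only [map_add, map_sub, _root_.map_mul, map_zero, kdt, kdy, kdz, kv4, kv5,
        mul_zero] at h
      linear_combination -h
    have f2 : v3 * dz = v5 * dx := by
      have h := congrArg (kill 3) e2
      simp only [map_add, map_sub, _root_.map_mul, map_zero, kdt, kdx, kdz, kv3, kv5,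
        mul_zero] at h
      linear_combination h
    have f3 : v3 * dy = v4 * dx := by
      have h := congrArg (kill 3) e3
      simp only [map_add, map_sub, _root_.map_mul, map_zero, kdt, kdx, kdy, kv3, kv4,
        mul_zero] at h
      linear_combination -h
    have hV0 : w 0 - w 6 * dt + w 9 * dx - g4 * dz + g5 * dy = 0 := by
      have ht : (w 0 - w 6 * dt + w 9 * dx - g4 * dz + g5 * dy) * dt = 0 := by
        linear_combination e1 + f1
      exact (mul_eq_zero.mp ht).resolve_right hdt
    have hV1 : w 1 - w 7 * dt + w 9 * dy + g3 * dz - g5 * dx = 0 := by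
      have ht : (w 1 - w 7 * dt + w 9 * dy + g3 * dz - g5 * dx) * dt = 0 := by
        linear_combination e2 - f2
      exact (mul_eq_zero.mp ht).resolve_right hdt
    have hV2 : w 2 - w 8 * dt + w 9 * dz - g3 * dy + g4 * dx = 0 := by
      have ht : (w 2 - w 8 * dt + w 9 * dz - g3 * dy + g4 * dx) * dt = 0 := by
        linear_combination e3 + f3
      exact (mul_eq_zero.mp ht).resolve_right hdt
    obtain ⟨p, hp'⟩ := kill_decomp 0 v3
    have hk0 : kill 0 v3 = 0 := by
      have h := congrArg (kill 0) f3
      simp only [_root_.map_mul, k0x, k0y, mul_zero] at h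
      exact (mul_eq_zero.mp h).resolve_right hdy
    rw [hk0, zero_add] at hp'
    have hp3 : v3 = dx * p := hp'
    have hp4 : v4 = p * dy := by
      refine mul_left_cancel₀ hdx ?_
      linear_combination -f3 + dy * hp3
    have hp5 : v5 = p * dz := by
      refine mul_left_cancel₀ hdx ?_
      linear_combination -f2 + dz * hp3
    have hw_eq : w = g3 • (fun j => maxwellA 0 j) + g4 • (fun j => maxwellA 1 j)
        + g5 • (fun j => maxwellA 2 j) + p • (fun j => maxwellA 3 j)
        + (-(w 6)) • (fun j => maxwellA 4 j) + (-(w 7)) • (fun j => maxwellA 5 j)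
        + (-(w 8)) • (fun j => maxwellA 6 j) + (-(w 9)) • (fun j => maxwellA 7 j) := by
      funext j
      fin_cases j
      · show w 0 = g3 * (0) + g4 * (dz) + g5 * (-dy) + p * (0) + -(w 6) * (-dt) + -(w 7) * (0) + -(w 8) * (0) + -(w 9) * (dx)
        linear_combination hV0
      · show w 1 = g3 * (-dz) + g4 * (0) + g5 * (dx) + p * (0) + -(w 6) * (0) + -(w 7) * (-dt) + -(w 8) * (0) + -(w 9) * (dy)
        linear_combination hV1
      · show w 2 = g3 * (dy) + g4 * (-dx) + g5 * (0) + p * (0) + -(w 6) * (0) + -(w 7) * (0) + -(w 8) * (-dt) + -(w 9) * (dz)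
        linear_combination hV2
      · show w 3 = g3 * (dt) + g4 * (0) + g5 * (0) + p * (dx) + -(w 6) * (0) + -(w 7) * (dz) + -(w 8) * (-dy) + -(w 9) * (0)
        linear_combination hg3 + hp3
      · show w 4 = g3 * (0) + g4 * (dt) + g5 * (0) + p * (dy) + -(w 6) * (-dz) + -(w 7) * (0) + -(w 8) * (dx) + -(w 9) * (0)
        linear_combination hg4 + hp4
      · show w 5 = g3 * (0) + g4 * (0) + g5 * (dt) + p * (dz) + -(w 6) * (dy) + -(w 7) * (-dx) + -(w 8) * (0) + -(w 9) * (0)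
        linear_combination hg5 + hp5
      · show w 6 = g3 * (0) + g4 * (0) + g5 * (0) + p * (0) + -(w 6) * (-1) + -(w 7) * (0) + -(w 8) * (0) + -(w 9) * (0)
        ring
      · show w 7 = g3 * (0) + g4 * (0) + g5 * (0) + p * (0) + -(w 6) * (0) + -(w 7) * (-1) + -(w 8) * (0) + -(w 9) * (0)
        ring
      · show w 8 = g3 * (0) + g4 * (0) + g5 * (0) + p * (0) + -(w 6) * (0) + -(w 7) * (0) + -(w 8) * (-1) + -(w 9) * (0)
        ring
      · show w 9 = g3 * (0) + g4 * (0) + g5 * (0) + p * (0) + -(w 6) * (0) + -(w 7) * (0) + -(w 8) * (0) + -(w 9) * (-1)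
        ring
    rw [hw_eq]
    have mem : ∀ i : Fin 8, (fun j => maxwellA i j) ∈
        Submodule.span (MvPolynomial (Fin 4) ℝ)
          (Set.range fun i : Fin 8 => fun j : Fin 10 => maxwellA i j) :=
      fun i => Submodule.subset_span ⟨i, rfl⟩
    refine Submodule.add_mem _ (Submodule.add_mem _ (Submodule.add_mem _
      (Submodule.add_mem _ (Submodule.add_mem _ (Submodule.add_mem _
      (Submodule.add_mem _ ?_ ?_) ?_) ?_) ?_) ?_) ?_) ?_ <;>
      exact Submodule.smul_mem _ _ (Submodule.subset_span ⟨_, rfl⟩)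
  · rintro x ⟨i, rfl⟩
    rw [SetLike.mem_coe, LinearMap.mem_ker, Matrix.vecMulLinear_apply]
    funext k
    show ∑ j, maxwellA i j * maxwellB j k = 0
    fin_cases i <;> fin_cases k
    · exact hAB00
    · exact hAB01
    · exact hAB02
    · exact hAB03
    · exact hAB10
    · exact hAB11
    · exact hAB12
    · exact hAB13
    · exact hAB20
    · exact hAB21
    · exact hAB22
    · exact hAB23
    · exact hAB30
    · exact hAB31
    · exact hAB32
    · exact hAB33
    · exact hAB40
    · exact hAB41
    · exact hAB42
    · exact hAB43
    · exact hAB50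
    · exact hAB51
    · exact hAB52
    · exact hAB53
    · exact hAB60
    · exact hAB61
    · exact hAB62
    · exact hAB63
    · exact hAB70
    · exact hAB71
    · exact hAB72
    · exact hAB73

end
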